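/- The element φ(X,Y) = [X,Y] of the completed free Lie algebra on X, Y satisfies the Lie 5-cycle relation φ(X₁₂,X₂₃)+φ(X₃₄,X₄₅)+φ(X₅₁,X₁₂)+φ(X₂₃,X₃₄)+φ(X₄₅,X₅₁)=0 in the completed pure sphere braid Lie algebra 𝔓₅, but does not satisfy the 3-cycle relation φ(X,Y)+φ(Y,Z)+φ(Z,X)=0 with X+Y+Z=0. -/

import Mathlib

open scoped BigOperators

/-- Words in the letters `X = 0`, `Y = 1`, ... -/
abbrev Word (n : ℕ) := List (Fin n)

/-- Coefficient families of non-commutative formal power series `k⟨⟨X₁,…,Xₙ⟩⟩`: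
a series is recorded by its coefficient at each word. -/
abbrev NC (k : Type*) (n : ℕ) := Word n → k

/-- The list of shuffles (with multiplicity) of two words. -/
def shuffle {α : Type*} : List α → List α → List (List α)
  | [], v => [v]
  | u, [] => [u]
  | a :: u, b :: v =>
      ((shuffle u (b :: v)).map (a :: ·)) ++ ((shuffle (a :: u) v).map (b :: ·))
  termination_by u v => u.length + v.length
  decreasing_by all_goals simp +arith +decide

variable {k : Type*}

/-- `φ` is group-like for the coproduct with `X`, `Y` primitive:
`Δφ = φ ⊗ φ` and constant term 1, expressed coefficientwise via shuffles. -/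
def IsGroupLike [CommRing k] (φ : NC k 2) : Prop :=
  φ [] = 1 ∧ ∀ u v : Word 2, φ u * φ v = ((shuffle u v).map φ).sum

/-- `φ` is Lie-like (primitive): `Δφ = φ⊗1 + 1⊗φ`, coefficientwise. -/
def IsLieLike [CommRing k] (φ : NC k 2) : Prop :=
  φ [] = 0 ∧ ∀ u v : Word 2, u ≠ [] → v ≠ [] → ((shuffle u v).map φ).sum = 0

/-- commutator group-like: group-like with vanishing coefficients of `X` and `Y`. -/
def IsCommGroupLike [CommRing k] (φ : NC k 2) : Prop :=
  IsGroupLike φ ∧ φ [0] = 0 ∧ φ [1] = 0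

/-- A degree-one element `a·T` of `A[[T]]`, modelling a degree-1 element of a
completed graded algebra. -/
noncomputable def lin {A : Type*} [Ring A] (a : A) : PowerSeries A :=
  PowerSeries.mk fun n => if n = 1 then a else 0

/-- Substitution `φ(X₁, X₂)` of a non-commutative power series `φ` at two
elements (of positive valuation) of a completed graded algebra, where the
completion is modelled by `A[[T]]` (degree `n` part = coefficient of `Tⁿ`). -/
noncomputable def substPS [CommRing k] {A : Type*} [Ring A] [Algebra k A]
    (φ : NC k 2) (P Q : PowerSeries A) : PowerSeries A :=
  PowerSeries.mk fun n =>
    ∑ m ∈ Finset.range (n + 1), ∑ u : Fin m → Fin 2,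
      φ (List.ofFn u) • PowerSeries.coeff n (((List.ofFn u).map ![P, Q]).prod)

/-- Exponential of a power series (meaningful when the constant term vanishes). -/
noncomputable def expPS (k : Type*) [Field k] {A : Type*} [Ring A] [Algebra k A]
    (s : PowerSeries A) : PowerSeries A :=
  PowerSeries.mk fun n =>
    ∑ m ∈ Finset.range (n + 1), (Nat.factorial m : k)⁻¹ • PowerSeries.coeff n (s ^ m)

/-- Coefficients of the multiplicative inverse of a power series with
constant term `1`. -/
noncomputable def invCoeff {A : Type*} [Ring A] (s : PowerSeries A) : ℕ → A
  | 0 => 1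
  | n + 1 => -∑ j : Fin (n + 1), invCoeff s j.1 * PowerSeries.coeff (n + 1 - j.1) s
  termination_by n => n
  decreasing_by exact j.2

/-- Inverse of a power series with constant term `1`. -/
noncomputable def PSInv {A : Type*} [Ring A] (s : PowerSeries A) : PowerSeries A :=
  PowerSeries.mk (invCoeff s)

/-- Relations presenting (the enveloping algebra of) the pure sphere braid Lie
algebra `𝔓₅` on 5 strings. -/
inductive P5Rel (k : Type*) [CommRing k] :
    FreeAlgebra k (Fin 5 × Fin 5) → FreeAlgebra k (Fin 5 × Fin 5) → Prop
  | diag (i : Fin 5) : P5Rel k (FreeAlgebra.ι k (i, i)) 0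
  | symm (i j : Fin 5) : P5Rel k (FreeAlgebra.ι k (i, j)) (FreeAlgebra.ι k (j, i))
  | rowsum (i : Fin 5) : P5Rel k (∑ j : Fin 5, FreeAlgebra.ι k (i, j)) 0
  | disj (i j l m : Fin 5) (h : i ≠ l ∧ i ≠ m ∧ j ≠ l ∧ j ≠ m) :
      P5Rel k (FreeAlgebra.ι k (i, j) * FreeAlgebra.ι k (l, m))
              (FreeAlgebra.ι k (l, m) * FreeAlgebra.ι k (i, j))

/-- The (graded) enveloping algebra `U𝔓₅` of the pure sphere braid Lie algebra. -/
abbrev P5A (k : Type*) [CommRing k] := RingQuot (P5Rel k)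

/-- The generator `X_{ij}` of `U𝔓₅`. -/
noncomputable def Xg (k : Type*) [CommRing k] (i j : Fin 5) : P5A k :=
  RingQuot.mkAlgHom k (P5Rel k) (FreeAlgebra.ι k (i, j))

/-- Relations presenting (the enveloping algebra of) the infinitesimal braid
("chord diagram") Lie algebra `𝔞ₙ`. -/
inductive ARel (k : Type*) [CommRing k] (n : ℕ) :
    FreeAlgebra k (Fin n × Fin n) → FreeAlgebra k (Fin n × Fin n) → Prop
  | diag (i : Fin n) : ARel k n (FreeAlgebra.ι k (i, i)) 0
  | symm (i j : Fin n) : ARel k n (FreeAlgebra.ι k (i, j)) (FreeAlgebra.ι k (j, i))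
  | comm3 (i j l : Fin n) (h : i ≠ j ∧ i ≠ l ∧ j ≠ l) :
      ARel k n (FreeAlgebra.ι k (i, j) * (FreeAlgebra.ι k (i, l) + FreeAlgebra.ι k (j, l)))
               ((FreeAlgebra.ι k (i, l) + FreeAlgebra.ι k (j, l)) * FreeAlgebra.ι k (i, j))
  | comm4 (i j l m : Fin n)
      (h : i ≠ j ∧ i ≠ l ∧ i ≠ m ∧ j ≠ l ∧ j ≠ m ∧ l ≠ m) :
      ARel k n (FreeAlgebra.ι k (i, j) * FreeAlgebra.ι k (l, m))
               (FreeAlgebra.ι k (l, m) * FreeAlgebra.ι k (i, j))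

/-- The (graded) enveloping algebra `U𝔞ₙ`. -/
abbrev AA (k : Type*) [CommRing k] (n : ℕ) := RingQuot (ARel k n)

/-- The generator `t_{ij}` of `U𝔞ₙ`. -/
noncomputable def tg (k : Type*) [CommRing k] (n : ℕ) (i j : Fin n) : AA k n :=
  RingQuot.mkAlgHom k (ARel k n) (FreeAlgebra.ι k (i, j))

/-- The series `X` (i.e. the image of the first generator) in the model
`(FreeAlgebra k (Fin 2))[[T]]` of `k⟨⟨X,Y⟩⟩`. -/
noncomputable def XF (k : Type*) [CommRing k] : PowerSeries (FreeAlgebra k (Fin 2)) :=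
  lin (FreeAlgebra.ι k (0 : Fin 2))

/-- The series `Y`. -/
noncomputable def YF (k : Type*) [CommRing k] : PowerSeries (FreeAlgebra k (Fin 2)) :=
  lin (FreeAlgebra.ι k (1 : Fin 2))

/-- The series `Z = -X-Y`. -/
noncomputable def ZF (k : Type*) [CommRing k] : PowerSeries (FreeAlgebra k (Fin 2)) :=
  -XF k - YF k

/-- `φ(X_{ab}, X_{bc})` in the completed `U𝔓₅`. -/
noncomputable def S5 (k : Type*) [Field k] (φ : NC k 2) (a b c : Fin 5) :
    PowerSeries (P5A k) :=
  substPS φ (lin (Xg k a b)) (lin (Xg k b c))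

/-- The multiplicative 5-cycle relation
`φ(X₁₂,X₂₃)φ(X₃₄,X₄₅)φ(X₅₁,X₁₂)φ(X₂₃,X₃₄)φ(X₄₅,X₅₁) = 1` in the completed `U𝔓₅`. -/
def FiveCycleMul (k : Type*) [Field k] (φ : NC k 2) : Prop :=
  S5 k φ 0 1 2 * S5 k φ 2 3 4 * S5 k φ 4 0 1 * S5 k φ 1 2 3 * S5 k φ 3 4 0 = 1

/-- `t_{ij}` as a degree-one element of the completed `U𝔞₄`. -/
noncomputable def lt (k : Type*) [Field k] (i j : Fin 4) : PowerSeries (AA k 4) :=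
  lin (tg k 4 i j)

/-- Drinfel'd's pentagon equation
`φ(t₁₂,t₂₃+t₂₄)φ(t₁₃+t₂₃,t₃₄) = φ(t₂₃,t₃₄)φ(t₁₂+t₁₃,t₂₄+t₃₄)φ(t₁₂,t₂₃)`
in the completed `U𝔞₄` (strings are `0,1,2,3`). -/
def Pentagon (k : Type*) [Field k] (φ : NC k 2) : Prop :=
  substPS φ (lt k 0 1) (lt k 1 2 + lt k 1 3) * substPS φ (lt k 0 2 + lt k 1 2) (lt k 2 3) =
    substPS φ (lt k 1 2) (lt k 2 3) *
      substPS φ (lt k 0 1 + lt k 0 2) (lt k 1 3 + lt k 2 3) * substPS φ (lt k 0 1) (lt k 1 2)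

/-- The 2-cycle relation `φ(X,Y)φ(Y,X) = 1` in `k⟨⟨X,Y⟩⟩`. -/
def TwoCycleMul (k : Type*) [Field k] (φ : NC k 2) : Prop :=
  substPS φ (XF k) (YF k) * substPS φ (YF k) (XF k) = 1

/-- The 3-cycle relation
`e^{μX/2}φ(Z,X)e^{μZ/2}φ(Y,Z)e^{μY/2}φ(X,Y) = 1`, `Z = -X-Y`, in `k⟨⟨X,Y⟩⟩`. -/
def ThreeCycleMul (k : Type*) [Field k] (μ : k) (φ : NC k 2) : Prop :=
  expPS k ((μ / 2) • XF k) * substPS φ (ZF k) (XF k) * expPS k ((μ / 2) • ZF k) *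
      substPS φ (YF k) (ZF k) * expPS k ((μ / 2) • YF k) * substPS φ (XF k) (YF k) = 1

/-- The special 3-cycle relation `φ(Z,X)φ(Y,Z)φ(X,Y) = 1`, `Z = -X-Y`. -/
def Special3 (k : Type*) [Field k] (φ : NC k 2) : Prop :=
  substPS φ (ZF k) (XF k) * substPS φ (YF k) (ZF k) * substPS φ (XF k) (YF k) = 1

/-- Drinfel'd's first hexagon equation, for elements `a = t₁₂`, `b = t₁₃`, `c = t₂₃`:
`exp(μ(t₁₃+t₂₃)/2) = φ(t₁₃,t₁₂)exp(μt₁₃/2)φ(t₁₃,t₂₃)⁻¹exp(μt₂₃/2)φ(t₁₂,t₂₃)`. -/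
def Hex1 (k : Type*) [Field k] {A : Type*} [Ring A] [Algebra k A]
    (μ : k) (φ : NC k 2) (a b c : A) : Prop :=
  expPS k ((μ / 2) • (lin b + lin c)) =
    substPS φ (lin b) (lin a) * expPS k ((μ / 2) • lin b) * PSInv (substPS φ (lin b) (lin c)) *
      expPS k ((μ / 2) • lin c) * substPS φ (lin a) (lin c)

/-- Drinfel'd's second hexagon equation, for elements `a = t₁₂`, `b = t₁₃`, `c = t₂₃`:
`exp(μ(t₁₂+t₁₃)/2) = φ(t₂₃,t₁₃)⁻¹exp(μt₁₃/2)φ(t₁₂,t₁₃)exp(μt₁₂/2)φ(t₁₂,t₂₃)⁻¹`. -/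
def Hex2 (k : Type*) [Field k] {A : Type*} [Ring A] [Algebra k A]
    (μ : k) (φ : NC k 2) (a b c : A) : Prop :=
  expPS k ((μ / 2) • (lin a + lin b)) =
    PSInv (substPS φ (lin c) (lin b)) * expPS k ((μ / 2) • lin b) * substPS φ (lin a) (lin b) *
      expPS k ((μ / 2) • lin a) * PSInv (substPS φ (lin a) (lin c))

/-- The series `φ(X,Y) = [X,Y] = XY - YX`. -/
def commSeries (k : Type*) [Field k] : NC k 2 := fun w =>
  if w = [0, 1] then 1 else if w = [1, 0] then -1 else 0

/-! ### Auxiliary lemmas -/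

section Aux

variable (k : Type*) [Field k] {A : Type*} [Ring A] [Algebra k A]

lemma commSeries_of_len {w : Word 2} (h : w.length ≠ 2) : commSeries k w = 0 := by
  unfold commSeries
  split_ifs with h1 h2
  · subst h1; simp at h
  · subst h2; simp at h
  · rfl

lemma coeff_lin_mul (a b : A) (n : ℕ) :
    PowerSeries.coeff n (lin a * lin b) = if n = 2 then a * b else 0 := by
  rw [PowerSeries.coeff_mul]
  rw [Finset.sum_congr rfl (fun p hp => ?_)
    (g := fun p => if p = ((1 : ℕ), (1 : ℕ)) then a * b else 0)]
  · rw [Finset.sum_ite_eq' (Finset.HasAntidiagonal.antidiagonal n) ((1 : ℕ), (1 : ℕ)) (fun _ => a * b)]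
    simp only [Finset.HasAntidiagonal.mem_antidiagonal]
    split_ifs with h1 h2 h2 <;> first | rfl | omega
  · obtain ⟨i, j⟩ := p
    simp only [lin, PowerSeries.coeff_mk, Prod.mk.injEq]
    split_ifs with h1 h2 h3 <;> simp_all

lemma substPS_commSeries (a b : A) :
    substPS (commSeries k) (lin a) (lin b) =
      PowerSeries.mk (fun n => if n = 2 then a * b - b * a else 0) := by
  ext n
  rw [substPS, PowerSeries.coeff_mk, PowerSeries.coeff_mk]
  rw [Finset.sum_congr rfl (fun m hm => ?_)
    (g := fun m => if m = 2 then (if n = 2 then a * b - b * a else 0) else 0)]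
  · rw [Finset.sum_ite_eq' (Finset.range (n + 1)) 2
      (fun _ => if n = 2 then a * b - b * a else 0)]
    split_ifs with h1 h2 <;> first | rfl | (simp only [Finset.mem_range] at h1; omega)
  · beta_reduce
    by_cases hm2 : m = 2
    · subst hm2
      rw [if_pos rfl]
      rw [← Equiv.sum_comp (piFinTwoEquiv (fun _ => Fin 2)).symm
        (fun u => commSeries k (List.ofFn u) •
          PowerSeries.coeff n (((List.ofFn u).map ![lin a, lin b]).prod))]
      rw [Fintype.sum_prod_type]
      simp only [piFinTwoEquiv_symm_apply, Fin.sum_univ_two]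
      simp only [List.ofFn_succ, List.ofFn_zero, Fin.cons_zero, Fin.cons_succ]
      have c00 : commSeries k [0, 0] = 0 := by
        unfold commSeries; rw [if_neg (by decide), if_neg (by decide)]
      have c01 : commSeries k [0, 1] = 1 := by
        unfold commSeries; rw [if_pos rfl]
      have c10 : commSeries k [1, 0] = -1 := by
        unfold commSeries; rw [if_neg (by decide), if_pos rfl]
      have c11 : commSeries k [1, 1] = 0 := by
        unfold commSeries; rw [if_neg (by decide), if_neg (by decide)]
      rw [c00, c01, c10, c11]
      simp only [List.map_cons, List.map_nil, Matrix.cons_val_zero, Matrix.cons_val_one,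
        Matrix.head_cons, List.prod_cons, List.prod_nil, mul_one, zero_smul, one_smul,
        neg_smul, zero_add, add_zero]
      rw [coeff_lin_mul, coeff_lin_mul]
      split_ifs <;> first | rfl | abel
    · rw [if_neg hm2]
      apply Finset.sum_eq_zero
      intro u _
      rw [commSeries_of_len k (by simpa using hm2), zero_smul]

lemma calc5 {B : Type*} [Ring B] (a b c d e f p q r s : B)
    (hp : p = -(a + b + c)) (hq : q = -(a + d + e))
    (hr : r = -(b + d + f)) (hs : s = -(c + e + f))
    (H1 : a * f = f * a) (H3 : c * d = d * c)
    (G1 : a * r = r * a) (G2 : e * p = p * e) (G3 : f * q = q * f)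
    (G4 : f * p = p * f) (G5 : c * r = r * c) :
    (a * d - d * a) + (f * s - s * f) + (p * a - a * p) + (d * f - f * d) +
      (s * p - p * s) = 0 := by
  have key : (a * d - d * a) + (f * s - s * f) + (p * a - a * p) + (d * f - f * d) +
      (s * p - p * s) =
      -(a * r - r * a) - 2 * (a * f - f * a) - (e * p - p * e) + (f * q - q * f) -
        (f * p - p * f) - (c * r - r * c) - (c * d - d * c) := by
    subst hp hq hr hs
    noncomm_ring
  rw [key, H1, H3, G1, G2, G3, G4, G5]
  noncomm_ring

lemma Xg_symm (i j : Fin 5) : Xg k i j = Xg k j i :=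
  RingQuot.mkAlgHom_rel k (P5Rel.symm i j)

lemma Xg_diag (i : Fin 5) : Xg k i i = 0 := by
  have := RingQuot.mkAlgHom_rel k (P5Rel.diag (k := k) i)
  rwa [map_zero] at this

lemma Xg_comm (i j l m : Fin 5)
    (h : i ≠ l ∧ i ≠ m ∧ j ≠ l ∧ j ≠ m) :
    Xg k i j * Xg k l m = Xg k l m * Xg k i j := by
  have := RingQuot.mkAlgHom_rel k (P5Rel.disj (k := k) i j l m h)
  rwa [map_mul, map_mul] at this

lemma Xg_row (i : Fin 5) : ∑ j : Fin 5, Xg k i j = 0 := by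
  have := RingQuot.mkAlgHom_rel k (P5Rel.rowsum (k := k) i)
  rwa [map_sum, map_zero] at this

lemma Xg_last (i : Fin 5) :
    Xg k i 4 = -(Xg k i 0 + Xg k i 1 + Xg k i 2 + Xg k i 3) := by
  have h := Xg_row k i
  rw [Fin.sum_univ_five] at h
  exact eq_neg_of_add_eq_zero_right h

end Aux

/-- `φ = [X,Y]` satisfies the Lie 5-cycle relation in `𝔓₅` but not the
3-cycle relation (showing the hypothesis `c₂(φ) = 0` is necessary). -/
theorem statement12 (k : Type*) [Field k] [CharZero k] :
    (S5 k (commSeries k) 0 1 2 + S5 k (commSeries k) 2 3 4 + S5 k (commSeries k) 4 0 1 +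
        S5 k (commSeries k) 1 2 3 + S5 k (commSeries k) 3 4 0 = 0) ∧
      ¬(substPS (commSeries k) (XF k) (YF k) + substPS (commSeries k) (YF k) (ZF k) +
          substPS (commSeries k) (ZF k) (XF k) = 0) := by
  constructor
  · -- the Lie 5-cycle relation in `𝔓₅`
    unfold S5
    rw [substPS_commSeries, substPS_commSeries, substPS_commSeries, substPS_commSeries,
      substPS_commSeries]
    ext n
    simp only [map_add, PowerSeries.coeff_mk, map_zero]
    by_cases hn : n = 2
    · subst hn
      simp only [if_pos rfl]
      have d0 : Xg k 0 4 = -(Xg k 0 1 + Xg k 0 2 + Xg k 0 3) := by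
        rw [Xg_last k 0, Xg_diag k 0]; abel
      have d1 : Xg k 1 4 = -(Xg k 0 1 + Xg k 1 2 + Xg k 1 3) := by
        rw [Xg_last k 1, Xg_symm k 1 0, Xg_diag k 1]; abel
      have d2 : Xg k 2 4 = -(Xg k 0 2 + Xg k 1 2 + Xg k 2 3) := by
        rw [Xg_last k 2, Xg_symm k 2 0, Xg_symm k 2 1, Xg_diag k 2]; abel
      have d3 : Xg k 3 4 = -(Xg k 0 3 + Xg k 1 3 + Xg k 2 3) := by
        rw [Xg_last k 3, Xg_symm k 3 0, Xg_symm k 3 1, Xg_symm k 3 2, Xg_diag k 3]; abel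
      rw [Xg_symm k 4 0]
      exact calc5 (Xg k 0 1) (Xg k 0 2) (Xg k 0 3) (Xg k 1 2) (Xg k 1 3) (Xg k 2 3)
        (Xg k 0 4) (Xg k 1 4) (Xg k 2 4) (Xg k 3 4) d0 d1 d2 d3
        (Xg_comm k 0 1 2 3 (by decide)) (Xg_comm k 0 3 1 2 (by decide))
        (Xg_comm k 0 1 2 4 (by decide)) (Xg_comm k 1 3 0 4 (by decide))
        (Xg_comm k 2 3 1 4 (by decide)) (Xg_comm k 2 3 0 4 (by decide))
        (Xg_comm k 0 3 2 4 (by decide))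
    · simp only [if_neg hn, add_zero]
  · -- failure of the 3-cycle relation
    intro h
    set u : FreeAlgebra k (Fin 2) := FreeAlgebra.ι k (0 : Fin 2) with hu
    set v : FreeAlgebra k (Fin 2) := FreeAlgebra.ι k (1 : Fin 2) with hv
    have hz : ZF k = lin (-u - v) := by
      unfold ZF XF YF
      ext n
      simp only [map_sub, map_neg, lin, PowerSeries.coeff_mk]
      split_ifs <;> simp [hu, hv]
    have hx : XF k = lin u := rfl
    have hy : YF k = lin v := rfl
    rw [hx, hy, hz, substPS_commSeries, substPS_commSeries, substPS_commSeries] at h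
    have h2 := congrArg (PowerSeries.coeff (R := FreeAlgebra k (Fin 2)) 2) h
    simp only [map_add, PowerSeries.coeff_mk, map_zero, if_pos rfl, if_true] at h2
    have key : u * v - v * u + (v * (-u - v) - (-u - v) * v) +
        ((-u - v) * u - u * (-u - v)) =
        (u * v - v * u) + (u * v - v * u) + (u * v - v * u) := by noncomm_ring
    rw [key] at h2
    set M0 : Matrix (Fin 2) (Fin 2) k := !![0, 1; 0, 0] with hM0
    set M1 : Matrix (Fin 2) (Fin 2) k := !![0, 0; 1, 0] with hM1
    set F := FreeAlgebra.lift k ![M0, M1] with hF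
    have h3 := congrArg F h2
    simp only [map_add, map_sub, map_mul, map_zero, hu, hv, hF,
      FreeAlgebra.lift_ι_apply, Matrix.cons_val_zero, Matrix.cons_val_one,
      Matrix.head_cons] at h3
    have h4 := congrFun (congrFun h3 0) 0
    have e1 : (M0 * M1) 0 0 = 1 := by
      rw [hM0, hM1]
      simp [Matrix.mul_apply, Fin.sum_univ_two]
    have e2 : (M1 * M0) 0 0 = 0 := by
      rw [hM0, hM1]
      simp [Matrix.mul_apply, Fin.sum_univ_two]
    simp only [Matrix.add_apply, Matrix.sub_apply, Matrix.zero_apply, e1, e2, sub_zero] at h4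
    norm_num at h4
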